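/- arXiv:1811.07719 — 2 statements merged into one kernel-verified Lean document; each statement's English description precedes it below -/
import Mathlib

section
/- Suppose φ : [k₀, ∞) → ℝ is a non-negative, decreasing function satisfying φ(h) ≤ (M/(h-k))^α · φ(k)^β for all h > k ≥ k₀, where M > 0, α > 0, and β > 1 are constants. Then φ(k₀ + l₀) = 0, where l₀ = 2^(β/(β-1)) · M · φ(k₀)^((β-1)/α). -/
open Real Filter

/-- De Giorgi iteration lemma. -/
theorem de_giorgi_iteration (φ : ℝ → ℝ) (k₀ M α β : ℝ)
    (hM : 0 < M) (hα : 0 < α) (hβ : 1 < β)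
    (hnonneg : ∀ k, k₀ ≤ k → 0 ≤ φ k)
    (hmono : ∀ k h : ℝ, k₀ ≤ k → k ≤ h → φ h ≤ φ k)
    (hrec : ∀ h k : ℝ, k₀ ≤ k → k < h → φ h ≤ (M / (h - k)) ^ α * (φ k) ^ β) :
    φ (k₀ + 2 ^ (β / (β - 1)) * M * (φ k₀) ^ ((β - 1) / α)) = 0 := by
  have hβ1 : (0:ℝ) < β - 1 := by linarith
  have hφ₀nn : 0 ≤ φ k₀ := hnonneg k₀ le_rfl
  rcases hφ₀nn.eq_or_lt with h0 | h0
  · rw [← h0, Real.zero_rpow (by positivity), mul_zero, add_zero]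
    exact h0.symm
  set φ₀ := φ k₀ with hφ₀def
  set l₀ : ℝ := 2 ^ (β / (β - 1)) * M * φ₀ ^ ((β - 1) / α) with hl₀def
  have hl₀ : 0 < l₀ := by positivity
  set c : ℝ := α / (β - 1) with hcdef
  have hc : 0 < c := by positivity
  set k : ℕ → ℝ := fun n => k₀ + l₀ - l₀ * (2:ℝ) ^ (-(n:ℝ)) with hkdef
  have h2pos : (0:ℝ) < 2 := by norm_num
  have hk0 : ∀ n : ℕ, k₀ ≤ k n := by
    intro n
    have h1 : (2:ℝ) ^ (-(n:ℝ)) ≤ 1 :=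
      Real.rpow_le_one_of_one_le_of_nonpos (by norm_num) (neg_nonpos.mpr (Nat.cast_nonneg n))
    have : l₀ * (2:ℝ) ^ (-(n:ℝ)) ≤ l₀ * 1 := by
      apply mul_le_mul_of_nonneg_left h1 hl₀.le
    simp only [hkdef]
    linarith
  have hkle : ∀ n : ℕ, k n ≤ k₀ + l₀ := by
    intro n
    have h1 : (0:ℝ) < (2:ℝ) ^ (-(n:ℝ)) := by positivity
    have : 0 ≤ l₀ * (2:ℝ) ^ (-(n:ℝ)) := by positivity
    simp only [hkdef]
    linarith
  have key : ∀ n : ℕ, φ (k n) ≤ φ₀ * (2:ℝ) ^ (-(n:ℝ) * c) := by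
    intro n
    induction n with
    | zero =>
      simp [hkdef, hφ₀def]
    | succ n ih =>
      have h2n : (0:ℝ) < (2:ℝ) ^ (-(n:ℝ)) := by positivity
      have h2 : (2:ℝ) ^ (-((n:ℝ)+1)) = (2:ℝ) ^ (-(n:ℝ)) / 2 := by
        rw [neg_add, Real.rpow_add h2pos, Real.rpow_neg_one]; ring
      have hdiff : k (n+1) - k n = l₀ * (2:ℝ) ^ (-(n:ℝ)) / 2 := by
        simp only [hkdef]
        push_cast
        rw [h2]; ring
      have hlt : k n < k (n+1) := by
        have hp : 0 < l₀ * (2:ℝ) ^ (-(n:ℝ)) / 2 := by positivity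
        rw [← hdiff] at hp
        exact sub_pos.mp hp
      have h1 := hrec (k (n+1)) (k n) (hk0 n) hlt
      have hmul : (M / (k (n+1) - k n)) ^ α * φ (k n) ^ β ≤
          (M / (k (n+1) - k n)) ^ α * (φ₀ * (2:ℝ) ^ (-(n:ℝ) * c)) ^ β := by
        apply mul_le_mul_of_nonneg_left
        · exact Real.rpow_le_rpow (hnonneg _ (hk0 n)) ih (by linarith)
        · have : 0 < M / (k (n+1) - k n) := by rw [hdiff]; positivity
          positivity
      have heq : (M / (l₀ * (2:ℝ) ^ (-(n:ℝ)) / 2)) ^ α *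
          (φ₀ * (2:ℝ) ^ (-(n:ℝ) * c)) ^ β = φ₀ * (2:ℝ) ^ (-((n:ℝ)+1) * c) := by
        have e1 : M / (l₀ * (2:ℝ) ^ (-(n:ℝ)) / 2) =
            (2:ℝ) ^ ((n:ℝ) + 1 - β/(β-1)) * φ₀ ^ (-((β-1)/α)) := by
          rw [hl₀def, Real.rpow_neg h2pos.le (n:ℝ), Real.rpow_neg h0.le,
            Real.rpow_sub h2pos, Real.rpow_add h2pos, Real.rpow_one]
          have hb : ((2:ℝ) ^ (β/(β-1))) ≠ 0 := by positivity
          have hn2 : ((2:ℝ) ^ ((n:ℝ))) ≠ 0 := by positivity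
          have hd : (φ₀ ^ ((β-1)/α)) ≠ 0 := by positivity
          field_simp
        rw [e1]
        rw [Real.mul_rpow (by positivity) (by positivity),
            Real.mul_rpow h0.le (by positivity),
            ← Real.rpow_mul h2pos.le, ← Real.rpow_mul h0.le,
            ← Real.rpow_mul h2pos.le]
        have hd2 : -((β-1)/α) * α = -(β-1) := by field_simp
        rw [hd2]
        have e3 : ((n:ℝ) + 1 - β/(β-1)) * α + -(n:ℝ) * c * β = -((n:ℝ)+1) * c := by
          rw [hcdef]
          field_simp
          ring
        calc (2:ℝ) ^ (((n:ℝ) + 1 - β/(β-1)) * α) * φ₀ ^ (-(β-1)) *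
              (φ₀ ^ β * (2:ℝ) ^ (-(n:ℝ) * c * β))
            = (φ₀ ^ β * φ₀ ^ (-(β-1))) *
              ((2:ℝ) ^ (((n:ℝ) + 1 - β/(β-1)) * α) * (2:ℝ) ^ (-(n:ℝ) * c * β)) := by ring
          _ = φ₀ ^ (β + -(β-1)) *
              (2:ℝ) ^ (((n:ℝ) + 1 - β/(β-1)) * α + -(n:ℝ) * c * β) := by
              rw [← Real.rpow_add h0, ← Real.rpow_add h2pos]
          _ = φ₀ * (2:ℝ) ^ (-((n:ℝ)+1) * c) := by
              rw [show β + -(β-1) = 1 by ring, Real.rpow_one, e3]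
      calc φ (k (n+1)) ≤ (M / (k (n+1) - k n)) ^ α * φ (k n) ^ β := h1
        _ ≤ (M / (k (n+1) - k n)) ^ α * (φ₀ * (2:ℝ) ^ (-(n:ℝ) * c)) ^ β := hmul
        _ = φ₀ * (2:ℝ) ^ (-((n:ℝ)+1) * c) := by rw [hdiff, heq]
        _ = φ₀ * (2:ℝ) ^ (-((n+1:ℕ):ℝ) * c) := by push_cast; ring_nf
  have hq1 : (2:ℝ) ^ (-c) < 1 :=
    Real.rpow_lt_one_of_one_lt_of_neg (by norm_num) (by linarith)
  have hq0 : (0:ℝ) ≤ (2:ℝ) ^ (-c) := by positivity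
  have htend : Tendsto (fun n : ℕ => φ₀ * (2:ℝ) ^ (-(n:ℝ) * c)) atTop (nhds 0) := by
    have hrw : ∀ n : ℕ, (2:ℝ) ^ (-(n:ℝ) * c) = ((2:ℝ) ^ (-c)) ^ n := by
      intro n
      rw [← Real.rpow_natCast ((2:ℝ) ^ (-c)) n, ← Real.rpow_mul h2pos.le]
      ring_nf
    simp only [hrw]
    have := tendsto_pow_atTop_nhds_zero_of_lt_one hq0 hq1
    simpa using this.const_mul φ₀
  have hle : ∀ n : ℕ, φ (k₀ + l₀) ≤ φ₀ * (2:ℝ) ^ (-(n:ℝ) * c) := fun n =>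
    (hmono (k n) (k₀ + l₀) (hk0 n) (hkle n)).trans (key n)
  have hfinal : φ (k₀ + l₀) ≤ 0 := ge_of_tendsto' htend hle
  exact le_antisymm hfinal (hnonneg _ (by linarith))
end

section
/- Let u ∈ C¹([a,b]; ℝ) with a < b and let p ≥ 1. Then (∫_a^b |u(x)|^p dx)^(1/p) ≤ (b-a)^(1/p) · ((2/(b-a)) ∫_a^b u(x)² dx + (b-a) ∫_a^b u'(x)² dx)^(1/2). -/
open Real intervalIntegral

theorem Lp_bound_by_L2_H1 (a b : ℝ) (hab : a < b) (p : ℝ) (hp : 1 ≤ p)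
    (u u' : ℝ → ℝ)
    (hderiv : ∀ x ∈ Set.Icc a b, HasDerivAt u (u' x) x)
    (hcont : ContinuousOn u' (Set.Icc a b)) :
    (∫ x in a..b, |u x| ^ p) ^ (1 / p) ≤
      (b - a) ^ (1 / p) *
        ((2 / (b - a)) * (∫ x in a..b, (u x) ^ 2)
          + (b - a) * (∫ x in a..b, (u' x) ^ 2)) ^ ((1 : ℝ) / 2) := by
  have hba : (0:ℝ) < b - a := sub_pos.2 hab
  have hp0 : (0:ℝ) < p := lt_of_lt_of_le one_pos hp
  have hcu : ContinuousOn u (Set.Icc a b) := fun x hx =>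
    (hderiv x hx).continuousAt.continuousWithinAt
  set I1 := ∫ x in a..b, (u x) ^ 2 with hI1
  set I2 := ∫ x in a..b, (u' x) ^ 2 with hI2
  set M := (2 / (b - a)) * I1 + (b - a) * I2 with hM
  have huIcc : Set.uIcc a b = Set.Icc a b := Set.uIcc_of_le hab.le
  have hiu2 : IntervalIntegrable (fun x => (u x)^2) MeasureTheory.volume a b :=
    ((hcu.pow 2).mono huIcc.subset).intervalIntegrable
  have hcg : ContinuousOn (fun t => 2 * u t * u' t) (Set.Icc a b) :=
    (continuousOn_const.mul hcu).mul hcont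
  have hcabs : ContinuousOn (fun t => |2 * u t * u' t|) (Set.Icc a b) := hcg.abs
  have hiabs : IntervalIntegrable (fun t => |2 * u t * u' t|) MeasureTheory.volume a b :=
    (hcabs.mono huIcc.subset).intervalIntegrable
  -- pointwise AM-GM bound
  have hpt : ∀ t : ℝ, |2 * u t * u' t| ≤ (u t)^2 / (b-a) + (b-a) * (u' t)^2 := by
    intro t
    have h1 : |2 * u t * u' t| = 2 * |u t| * |u' t| := by
      rw [abs_mul, abs_mul]; norm_num
    rw [h1, div_add' _ _ _ hba.ne', le_div_iff₀ hba]
    have e : (u t)^2 + (b-a) * (u' t)^2 * (b-a) - 2 * |u t| * |u' t| * (b-a)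
        = (|u t| - (b-a) * |u' t|)^2 := by
      rw [← sq_abs (u t), ← sq_abs (u' t)]; ring
    linarith [sq_nonneg (|u t| - (b-a) * |u' t|), e]
  -- integral of |2uu'| is bounded
  have hintabs : (∫ t in a..b, |2 * u t * u' t|) ≤ I1 / (b-a) + (b-a) * I2 := by
    have hrhsint : IntervalIntegrable (fun t => (u t)^2/(b-a) + (b-a)*(u' t)^2)
        MeasureTheory.volume a b :=
      (((hcu.pow 2).div_const _ |>.add (((continuousOn_const.mul (hcont.pow 2))))).mono
        huIcc.subset).intervalIntegrable
    have := intervalIntegral.integral_mono_on hab.le hiabs hrhsint (fun t _ => hpt t)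
    calc (∫ t in a..b, |2 * u t * u' t|)
        ≤ ∫ t in a..b, ((u t)^2/(b-a) + (b-a)*(u' t)^2) := this
      _ = I1 / (b-a) + (b-a) * I2 := by
          rw [intervalIntegral.integral_add (f := fun t => (u t)^2/(b-a)) (g := fun t => (b-a)*(u' t)^2)
              (((hcu.pow 2).div_const _ |>.mono huIcc.subset).intervalIntegrable)
              (((continuousOn_const.mul (hcont.pow 2)).mono huIcc.subset).intervalIntegrable),
            intervalIntegral.integral_div, intervalIntegral.integral_const_mul]
  -- key sup bound
  have key : ∀ x ∈ Set.Icc a b, (u x)^2 ≤ M := by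
    obtain ⟨y, hy, hmin⟩ := isCompact_Icc.exists_isMinOn (Set.nonempty_Icc.2 hab.le)
      (hcu.pow 2 : ContinuousOn (fun t => (u t)^2) _)
    intro x hx
    have h1 : (b - a) * (u y)^2 ≤ I1 := by
      have := intervalIntegral.integral_mono_on (μ := MeasureTheory.volume) hab.le
        intervalIntegrable_const hiu2 (fun t ht => hmin ht)
      simpa [smul_eq_mul] using this
    have hsub : Set.uIcc y x ⊆ Set.Icc a b := Set.uIcc_subset_Icc hy hx
    have hftc : (u x)^2 - (u y)^2 = ∫ t in y..x, 2 * u t * u' t := by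
      refine (intervalIntegral.integral_eq_sub_of_hasDerivAt
        (f := fun t => (u t)^2) (fun t ht => ?_)
        ((hcg.mono hsub).intervalIntegrable)).symm
      have h := (hderiv t (hsub ht)).pow 2
      norm_num at h
      exact h
    have habs : (∫ t in y..x, 2 * u t * u' t) ≤ ∫ t in a..b, |2 * u t * u' t| := by
      rcases le_total y x with h | h
      · calc (∫ t in y..x, 2 * u t * u' t)
            ≤ |∫ t in y..x, 2 * u t * u' t| := le_abs_self _
          _ ≤ ∫ t in y..x, |2 * u t * u' t| :=
              intervalIntegral.abs_integral_le_integral_abs h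
          _ ≤ ∫ t in a..b, |2 * u t * u' t| :=
              intervalIntegral.integral_mono_interval hy.1 h hx.2
                (MeasureTheory.ae_of_all _ (fun t => abs_nonneg _)) hiabs
      · calc (∫ t in y..x, 2 * u t * u' t)
            = -(∫ t in x..y, 2 * u t * u' t) := (intervalIntegral.integral_symm _ _)
          _ ≤ |∫ t in x..y, 2 * u t * u' t| := neg_le_abs _
          _ ≤ ∫ t in x..y, |2 * u t * u' t| :=
              intervalIntegral.abs_integral_le_integral_abs h
          _ ≤ ∫ t in a..b, |2 * u t * u' t| :=
              intervalIntegral.integral_mono_interval hx.1 h hy.2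
                (MeasureTheory.ae_of_all _ (fun t => abs_nonneg _)) hiabs
    have hy2 : (u y)^2 ≤ I1 / (b-a) := by
      rw [le_div_iff₀ hba]; linarith
    have : (u x)^2 ≤ (u y)^2 + (I1 / (b-a) + (b-a) * I2) := by
      have := hftc ▸ (habs.trans hintabs)
      linarith
    have hMeq : M = I1/(b-a) + I1/(b-a) + (b-a)*I2 := by
      rw [hM]; field_simp; ring
    rw [hMeq]; linarith
  have hM0 : 0 ≤ M := le_trans (sq_nonneg (u a)) (key a ⟨le_refl a, hab.le⟩)
  have habsle : ∀ x ∈ Set.Icc a b, |u x| ≤ M ^ ((1:ℝ)/2) := by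
    intro x hx
    rw [← Real.sqrt_sq_eq_abs, Real.sqrt_eq_rpow]
    exact Real.rpow_le_rpow (sq_nonneg _) (key x hx) (by norm_num)
  have hip : IntervalIntegrable (fun x => |u x| ^ p) MeasureTheory.volume a b := by
    apply ContinuousOn.intervalIntegrable
    exact ContinuousOn.rpow_const ((hcu.mono huIcc.subset).abs) (fun x _ => Or.inr hp0.le)
  have hintle : (∫ x in a..b, |u x| ^ p) ≤ (b - a) * (M ^ ((1:ℝ)/2)) ^ p := by
    have := intervalIntegral.integral_mono_on (μ := MeasureTheory.volume) hab.le hip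
      intervalIntegrable_const
      (fun t ht => Real.rpow_le_rpow (abs_nonneg _) (habsle t ht) hp0.le)
    simpa [smul_eq_mul] using this
  have hlhs0 : 0 ≤ ∫ x in a..b, |u x| ^ p :=
    intervalIntegral.integral_nonneg hab.le (fun t _ => Real.rpow_nonneg (abs_nonneg _) p)
  calc (∫ x in a..b, |u x| ^ p) ^ (1/p)
      ≤ ((b - a) * (M ^ ((1:ℝ)/2)) ^ p) ^ (1/p) :=
        Real.rpow_le_rpow hlhs0 hintle (by positivity)
    _ = (b - a) ^ (1/p) * M ^ ((1:ℝ)/2) := by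
        rw [Real.mul_rpow hba.le (Real.rpow_nonneg (Real.rpow_nonneg hM0 _) _),
          ← Real.rpow_mul hM0, ← Real.rpow_mul hM0,
          show (1:ℝ)/2 * p * (1/p) = 1/2 by field_simp]
end
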